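/- Let v be C² and φ positive C² on Ω ⊂ ℝ², δ ≠ 0, and define v₁ = δ⁻¹ φ² ∂_y v, v₂ = −δ⁻¹ φ² ∂_x v, w₁ = φ² v, w₂ = v₂ + i v₁. If div(φ²∇v) + δ²φ²v = 0 on Ω, then with α = ∂̄(log φ) (where ∂̄ = (∂_x + i∂_y)/2), the functions satisfy ∂̄w₁ = 2α w₁ − (δ/2) conj(w₂) and ∂̄w₂ = (δ/2) w₁ + α w₂ − conj(α) conj(w₂) on Ω. -/

import Mathlib

noncomputable def pdx (f : ℝ × ℝ → ℝ) (p : ℝ × ℝ) : ℝ := deriv (fun x => f (x, p.2)) p.1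
noncomputable def pdy (f : ℝ × ℝ → ℝ) (p : ℝ × ℝ) : ℝ := deriv (fun y => f (p.1, y)) p.2

noncomputable def pdxC (f : ℝ × ℝ → ℂ) (p : ℝ × ℝ) : ℂ := deriv (fun x => f (x, p.2)) p.1
noncomputable def pdyC (f : ℝ × ℝ → ℂ) (p : ℝ × ℝ) : ℂ := deriv (fun y => f (p.1, y)) p.2

/-- The Cauchy–Riemann operator `∂̄ = ½(∂ₓ + i ∂_y)` on `ℝ² ≅ ℂ`. -/
noncomputable def dbar (f : ℝ × ℝ → ℂ) (p : ℝ × ℝ) : ℂ :=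
  (pdxC f p + Complex.I * pdyC f p) / 2

open Filter

lemma hasDerivAt_slice_x {E : Type*} [NormedAddCommGroup E] [NormedSpace ℝ E]
    (f : ℝ × ℝ → E) (p : ℝ × ℝ) (hf : DifferentiableAt ℝ f p) :
    HasDerivAt (fun x => f (x, p.2)) (fderiv ℝ f p (1, 0)) p.1 := by
  have h1 : HasDerivAt (fun x : ℝ => ((x, p.2) : ℝ × ℝ)) ((1:ℝ), (0:ℝ)) p.1 :=
    (hasDerivAt_id p.1).prodMk (hasDerivAt_const p.1 p.2)
  exact hf.hasFDerivAt.comp_hasDerivAt p.1 h1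

lemma hasDerivAt_slice_y {E : Type*} [NormedAddCommGroup E] [NormedSpace ℝ E]
    (f : ℝ × ℝ → E) (p : ℝ × ℝ) (hf : DifferentiableAt ℝ f p) :
    HasDerivAt (fun y => f (p.1, y)) (fderiv ℝ f p (0, 1)) p.2 := by
  have h1 : HasDerivAt (fun y : ℝ => ((p.1, y) : ℝ × ℝ)) ((0:ℝ), (1:ℝ)) p.2 :=
    (hasDerivAt_const p.2 p.1).prodMk (hasDerivAt_id p.2)
  exact hf.hasFDerivAt.comp_hasDerivAt p.2 h1

lemma slice_x_congr {F : Type*} [NormedAddCommGroup F] [NormedSpace ℝ F]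
    {f g : ℝ × ℝ → F} {p : ℝ × ℝ} (h : f =ᶠ[nhds p] g) :
    deriv (fun x => f (x, p.2)) p.1 = deriv (fun x => g (x, p.2)) p.1 := by
  apply Filter.EventuallyEq.deriv_eq
  have ht : Tendsto (fun x : ℝ => ((x, p.2) : ℝ × ℝ)) (nhds p.1) (nhds p) := by
    have hc : Continuous fun x : ℝ => ((x, p.2) : ℝ × ℝ) := continuous_id.prodMk continuous_const
    simpa using hc.tendsto p.1
  exact h.comp_tendsto ht

lemma slice_y_congr {F : Type*} [NormedAddCommGroup F] [NormedSpace ℝ F]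
    {f g : ℝ × ℝ → F} {p : ℝ × ℝ} (h : f =ᶠ[nhds p] g) :
    deriv (fun y => f (p.1, y)) p.2 = deriv (fun y => g (p.1, y)) p.2 := by
  apply Filter.EventuallyEq.deriv_eq
  have ht : Tendsto (fun y : ℝ => ((p.1, y) : ℝ × ℝ)) (nhds p.2) (nhds p) := by
    have hc : Continuous fun y : ℝ => ((p.1, y) : ℝ × ℝ) := continuous_const.prodMk continuous_id
    simpa using hc.tendsto p.2
  exact h.comp_tendsto ht

lemma pdxC_eq {a b : ℝ × ℝ → ℝ} {p : ℝ × ℝ} {a' b' : ℝ}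
    (ha : HasDerivAt (fun x => a (x, p.2)) a' p.1)
    (hb : HasDerivAt (fun x => b (x, p.2)) b' p.1) :
    pdxC (fun q => ((a q : ℝ) : ℂ) + Complex.I * ((b q : ℝ) : ℂ)) p
      = (a' : ℂ) + Complex.I * (b' : ℂ) :=
  (ha.ofReal_comp.add (hb.ofReal_comp.const_mul Complex.I)).deriv

lemma pdyC_eq {a b : ℝ × ℝ → ℝ} {p : ℝ × ℝ} {a' b' : ℝ}
    (ha : HasDerivAt (fun y => a (p.1, y)) a' p.2)
    (hb : HasDerivAt (fun y => b (p.1, y)) b' p.2) :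
    pdyC (fun q => ((a q : ℝ) : ℂ) + Complex.I * ((b q : ℝ) : ℂ)) p
      = (a' : ℂ) + Complex.I * (b' : ℂ) :=
  (ha.ofReal_comp.add (hb.ofReal_comp.const_mul Complex.I)).deriv

lemma pdxC_eq' {a : ℝ × ℝ → ℝ} {p : ℝ × ℝ} {a' : ℝ}
    (ha : HasDerivAt (fun x => a (x, p.2)) a' p.1) :
    pdxC (fun q => ((a q : ℝ) : ℂ)) p = (a' : ℂ) :=
  ha.ofReal_comp.deriv

lemma pdyC_eq' {a : ℝ × ℝ → ℝ} {p : ℝ × ℝ} {a' : ℝ}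
    (ha : HasDerivAt (fun y => a (p.1, y)) a' p.2) :
    pdyC (fun q => ((a q : ℝ) : ℂ)) p = (a' : ℂ) :=
  ha.ofReal_comp.deriv

set_option maxHeartbeats 1600000 in
theorem beltrami_system (Ω : Set (ℝ × ℝ)) (hΩ : IsOpen Ω)
    (v φ : ℝ × ℝ → ℝ) (δ : ℝ) (hδ : δ ≠ 0)
    (hv : ContDiffOn ℝ 2 v Ω) (hφ : ContDiffOn ℝ 2 φ Ω)
    (hφpos : ∀ p ∈ Ω, 0 < φ p)
    (heq : ∀ p ∈ Ω,
      pdx (fun q => φ q ^ 2 * pdx v q) p + pdy (fun q => φ q ^ 2 * pdy v q) p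
        + δ ^ 2 * φ p ^ 2 * v p = 0) :
    ∀ p ∈ Ω,
      dbar (fun q => ((φ q ^ 2 * v q : ℝ) : ℂ)) p
          = 2 * dbar (fun q => ((Real.log (φ q) : ℝ) : ℂ)) p
              * ((φ p ^ 2 * v p : ℝ) : ℂ)
            - (δ / 2 : ℂ) * (starRingEnd ℂ)
                (((-(δ⁻¹) * φ p ^ 2 * pdx v p : ℝ) : ℂ)
                  + Complex.I * ((δ⁻¹ * φ p ^ 2 * pdy v p : ℝ) : ℂ)) ∧
      dbar (fun q => ((-(δ⁻¹) * φ q ^ 2 * pdx v q : ℝ) : ℂ)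
              + Complex.I * ((δ⁻¹ * φ q ^ 2 * pdy v q : ℝ) : ℂ)) p
          = (δ / 2 : ℂ) * ((φ p ^ 2 * v p : ℝ) : ℂ)
            + dbar (fun q => ((Real.log (φ q) : ℝ) : ℂ)) p
                * (((-(δ⁻¹) * φ p ^ 2 * pdx v p : ℝ) : ℂ)
                  + Complex.I * ((δ⁻¹ * φ p ^ 2 * pdy v p : ℝ) : ℂ))
            - (starRingEnd ℂ) (dbar (fun q => ((Real.log (φ q) : ℝ) : ℂ)) p)
                * (starRingEnd ℂ)
                  (((-(δ⁻¹) * φ p ^ 2 * pdx v p : ℝ) : ℂ)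
                    + Complex.I * ((δ⁻¹ * φ p ^ 2 * pdy v p : ℝ) : ℂ)) := by
  intro p hp
  have hmem : Ω ∈ nhds p := hΩ.mem_nhds hp
  have hv2 : ContDiffAt ℝ 2 v p := hv.contDiffAt hmem
  have hφ2 : ContDiffAt ℝ 2 φ p := hφ.contDiffAt hmem
  have hvd : DifferentiableAt ℝ v p := hv2.differentiableAt two_ne_zero
  have hφd : DifferentiableAt ℝ φ p := hφ2.differentiableAt two_ne_zero
  set g1 : ℝ × ℝ → ℝ := fun q => fderiv ℝ v q (1, 0) with hg1def
  set g2 : ℝ × ℝ → ℝ := fun q => fderiv ℝ v q (0, 1) with hg2def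
  -- g1, g2 are C¹ at p
  have hfd : ContDiffAt ℝ 1 (fderiv ℝ v) p := hv2.fderiv_right (le_refl 2)
  have hg1c : ContDiffAt ℝ 1 g1 p :=
    (ContinuousLinearMap.apply ℝ ℝ ((1:ℝ), (0:ℝ))).contDiff.contDiffAt.comp p hfd
  have hg2c : ContDiffAt ℝ 1 g2 p :=
    (ContinuousLinearMap.apply ℝ ℝ ((0:ℝ), (1:ℝ))).contDiff.contDiffAt.comp p hfd
  have hg1d : DifferentiableAt ℝ g1 p := hg1c.differentiableAt one_ne_zero
  have hg2d : DifferentiableAt ℝ g2 p := hg2c.differentiableAt one_ne_zero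
  -- pdx v = g1 and pdy v = g2 on Ω
  have hx : ∀ q ∈ Ω, pdx v q = g1 q := by
    intro q hq
    exact (hasDerivAt_slice_x v q ((hv.contDiffAt (hΩ.mem_nhds hq)).differentiableAt two_ne_zero)).deriv
  have hy : ∀ q ∈ Ω, pdy v q = g2 q := by
    intro q hq
    exact (hasDerivAt_slice_y v q ((hv.contDiffAt (hΩ.mem_nhds hq)).differentiableAt two_ne_zero)).deriv
  -- abbreviations for the point values
  set F : ℝ := φ p with hF
  set V : ℝ := v p with hV
  set Fx : ℝ := fderiv ℝ φ p (1, 0) with hFx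
  set Fy : ℝ := fderiv ℝ φ p (0, 1) with hFy
  set Vx : ℝ := g1 p with hVx
  set Vy : ℝ := g2 p with hVy
  set A11 : ℝ := fderiv ℝ g1 p (1, 0) with hA11
  set A12 : ℝ := fderiv ℝ g1 p (0, 1) with hA12
  set A21 : ℝ := fderiv ℝ g2 p (1, 0) with hA21
  set A22 : ℝ := fderiv ℝ g2 p (0, 1) with hA22
  have hFne : F ≠ 0 := ne_of_gt (hφpos p hp)
  -- slice derivatives
  have sφx : HasDerivAt (fun x => φ (x, p.2)) Fx p.1 := hasDerivAt_slice_x φ p hφd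
  have sφy : HasDerivAt (fun y => φ (p.1, y)) Fy p.2 := hasDerivAt_slice_y φ p hφd
  have svx : HasDerivAt (fun x => v (x, p.2)) Vx p.1 := hasDerivAt_slice_x v p hvd
  have svy : HasDerivAt (fun y => v (p.1, y)) Vy p.2 := hasDerivAt_slice_y v p hvd
  have sg1x : HasDerivAt (fun x => g1 (x, p.2)) A11 p.1 := hasDerivAt_slice_x g1 p hg1d
  have sg1y : HasDerivAt (fun y => g1 (p.1, y)) A12 p.2 := hasDerivAt_slice_y g1 p hg1d
  have sg2x : HasDerivAt (fun x => g2 (x, p.2)) A21 p.1 := hasDerivAt_slice_x g2 p hg2d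
  have sg2y : HasDerivAt (fun y => g2 (p.1, y)) A22 p.2 := hasDerivAt_slice_y g2 p hg2d
  -- symmetry of second derivatives : A21 = A12
  have hsymm : A21 = A12 := by
    have hD : DifferentiableAt ℝ (fderiv ℝ v) p := hfd.differentiableAt one_ne_zero
    have hcomp1 : HasFDerivAt g1
        ((ContinuousLinearMap.apply ℝ ℝ ((1:ℝ), (0:ℝ))).comp (fderiv ℝ (fderiv ℝ v) p)) p :=
      (ContinuousLinearMap.apply ℝ ℝ ((1:ℝ), (0:ℝ))).hasFDerivAt.comp p hD.hasFDerivAt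
    have hcomp2 : HasFDerivAt g2
        ((ContinuousLinearMap.apply ℝ ℝ ((0:ℝ), (1:ℝ))).comp (fderiv ℝ (fderiv ℝ v) p)) p :=
      (ContinuousLinearMap.apply ℝ ℝ ((0:ℝ), (1:ℝ))).hasFDerivAt.comp p hD.hasFDerivAt
    have e1 : A12 = fderiv ℝ (fderiv ℝ v) p (0, 1) (1, 0) := by
      rw [hA12, hcomp1.fderiv]; rfl
    have e2 : A21 = fderiv ℝ (fderiv ℝ v) p (1, 0) (0, 1) := by
      rw [hA21, hcomp2.fderiv]; rfl
    have hs := hv2.isSymmSndFDerivAt (by simp)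
    rw [e1, e2, hs.eq]
  -- slice derivatives of products
  have s1x : HasDerivAt (fun x => φ (x, p.2) ^ 2 * v (x, p.2))
      (2 * F ^ 1 * Fx * V + F ^ 2 * Vx) p.1 := by
    have h := (sφx.pow 2).mul svx
    simpa [Pi.mul_def, Pi.pow_def] using h
  have s1y : HasDerivAt (fun y => φ (p.1, y) ^ 2 * v (p.1, y))
      (2 * F ^ 1 * Fy * V + F ^ 2 * Vy) p.2 := by
    have h := (sφy.pow 2).mul svy
    simpa [Pi.mul_def, Pi.pow_def] using h
  have s3x : HasDerivAt (fun x => -(δ⁻¹) * (φ (x, p.2) ^ 2 * g1 (x, p.2)))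
      (-(δ⁻¹) * (2 * F ^ 1 * Fx * Vx + F ^ 2 * A11)) p.1 := by
    have h := ((sφx.pow 2).mul sg1x).const_mul (-(δ⁻¹))
    simpa using h
  have s3y : HasDerivAt (fun y => -(δ⁻¹) * (φ (p.1, y) ^ 2 * g1 (p.1, y)))
      (-(δ⁻¹) * (2 * F ^ 1 * Fy * Vx + F ^ 2 * A12)) p.2 := by
    have h := ((sφy.pow 2).mul sg1y).const_mul (-(δ⁻¹))
    simpa using h
  have s4x : HasDerivAt (fun x => δ⁻¹ * (φ (x, p.2) ^ 2 * g2 (x, p.2)))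
      (δ⁻¹ * (2 * F ^ 1 * Fx * Vy + F ^ 2 * A21)) p.1 := by
    have h := ((sφx.pow 2).mul sg2x).const_mul δ⁻¹
    simpa using h
  have s4y : HasDerivAt (fun y => δ⁻¹ * (φ (p.1, y) ^ 2 * g2 (p.1, y)))
      (δ⁻¹ * (2 * F ^ 1 * Fy * Vy + F ^ 2 * A22)) p.2 := by
    have h := ((sφy.pow 2).mul sg2y).const_mul δ⁻¹
    simpa using h
  have slogx : HasDerivAt (fun x => Real.log (φ (x, p.2))) (Fx / F) p.1 :=
    sφx.log hFne
  have slogy : HasDerivAt (fun y => Real.log (φ (p.1, y))) (Fy / F) p.2 :=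
    sφy.log hFne
  -- the PDE at p, in terms of g1, g2
  have hPQ : (2 * F ^ 1 * Fx * Vx + F ^ 2 * A11) + (2 * F ^ 1 * Fy * Vy + F ^ 2 * A22)
      + δ ^ 2 * F ^ 2 * V = 0 := by
    have h0 := heq p hp
    have e1 : pdx (fun q => φ q ^ 2 * pdx v q) p = 2 * F ^ 1 * Fx * Vx + F ^ 2 * A11 := by
      have hev : (fun q => φ q ^ 2 * pdx v q) =ᶠ[nhds p] (fun q => φ q ^ 2 * g1 q) := by
        filter_upwards [hmem] with q hq
        rw [hx q hq]
      exact (slice_x_congr hev).trans ((sφx.pow 2).mul sg1x).deriv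
    have e2 : pdy (fun q => φ q ^ 2 * pdy v q) p = 2 * F ^ 1 * Fy * Vy + F ^ 2 * A22 := by
      have hev : (fun q => φ q ^ 2 * pdy v q) =ᶠ[nhds p] (fun q => φ q ^ 2 * g2 q) := by
        filter_upwards [hmem] with q hq
        rw [hy q hq]
      exact (slice_y_congr hev).trans ((sφy.pow 2).mul sg2y).deriv
    rw [e1, e2] at h0
    linarith [h0]
  -- the three dbar values
  have hdlog : dbar (fun q => ((Real.log (φ q) : ℝ) : ℂ)) p
      = ((Fx / F : ℝ) : ℂ) / 2 + Complex.I * ((Fy / F : ℝ) : ℂ) / 2 := by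
    rw [dbar, pdxC_eq' slogx, pdyC_eq' slogy]
    ring
  have hdw1 : dbar (fun q => ((φ q ^ 2 * v q : ℝ) : ℂ)) p
      = ((2 * F ^ 1 * Fx * V + F ^ 2 * Vx : ℝ) : ℂ) / 2
        + Complex.I * ((2 * F ^ 1 * Fy * V + F ^ 2 * Vy : ℝ) : ℂ) / 2 := by
    rw [dbar, pdxC_eq' s1x, pdyC_eq' s1y]
    ring
  have hdw2 : dbar (fun q => ((-(δ⁻¹) * φ q ^ 2 * pdx v q : ℝ) : ℂ)
        + Complex.I * ((δ⁻¹ * φ q ^ 2 * pdy v q : ℝ) : ℂ)) p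
      = (((-(δ⁻¹) * (2 * F ^ 1 * Fx * Vx + F ^ 2 * A11) : ℝ) : ℂ)
          + Complex.I * ((δ⁻¹ * (2 * F ^ 1 * Fx * Vy + F ^ 2 * A21) : ℝ) : ℂ)
          + Complex.I * (((-(δ⁻¹) * (2 * F ^ 1 * Fy * Vx + F ^ 2 * A12) : ℝ) : ℂ)
            + Complex.I * ((δ⁻¹ * (2 * F ^ 1 * Fy * Vy + F ^ 2 * A22) : ℝ) : ℂ))) / 2 := by
    have hev : (fun q => ((-(δ⁻¹) * φ q ^ 2 * pdx v q : ℝ) : ℂ)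
          + Complex.I * ((δ⁻¹ * φ q ^ 2 * pdy v q : ℝ) : ℂ))
        =ᶠ[nhds p] (fun q => ((-(δ⁻¹) * (φ q ^ 2 * g1 q) : ℝ) : ℂ)
          + Complex.I * ((δ⁻¹ * (φ q ^ 2 * g2 q) : ℝ) : ℂ)) := by
      filter_upwards [hmem] with q hq
      rw [hx q hq, hy q hq]
      push_cast
      ring
    rw [dbar]
    rw [show pdxC (fun q => ((-(δ⁻¹) * φ q ^ 2 * pdx v q : ℝ) : ℂ)
          + Complex.I * ((δ⁻¹ * φ q ^ 2 * pdy v q : ℝ) : ℂ)) p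
        = pdxC (fun q => ((-(δ⁻¹) * (φ q ^ 2 * g1 q) : ℝ) : ℂ)
          + Complex.I * ((δ⁻¹ * (φ q ^ 2 * g2 q) : ℝ) : ℂ)) p from slice_x_congr hev]
    rw [show pdyC (fun q => ((-(δ⁻¹) * φ q ^ 2 * pdx v q : ℝ) : ℂ)
          + Complex.I * ((δ⁻¹ * φ q ^ 2 * pdy v q : ℝ) : ℂ)) p
        = pdyC (fun q => ((-(δ⁻¹) * (φ q ^ 2 * g1 q) : ℝ) : ℂ)
          + Complex.I * ((δ⁻¹ * (φ q ^ 2 * g2 q) : ℝ) : ℂ)) p from slice_y_congr hev]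
    rw [pdxC_eq s3x s4x, pdyC_eq s3y s4y]
  -- point values
  have hxp : pdx v p = Vx := hx p hp
  have hyp : pdy v p = Vy := hy p hp
  rw [hsymm] at hdw2
  have hsimp : True := trivial
  constructor
  · rw [hdw1, hdlog, hxp, hyp]
    rw [Complex.ext_iff]
    constructor
    · simp only [Complex.add_re, Complex.add_im, Complex.sub_re, Complex.sub_im, Complex.neg_re,
        Complex.neg_im, Complex.mul_re, Complex.mul_im, Complex.div_re, Complex.div_im,
        Complex.I_re, Complex.I_im, Complex.ofReal_re, Complex.ofReal_im, Complex.conj_re,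
        Complex.conj_im, Complex.normSq_apply, Complex.re_ofNat, Complex.im_ofNat,
        mul_zero, zero_mul, mul_one, sub_zero, zero_sub, add_zero, zero_add, neg_zero, neg_neg]
      field_simp
      ring
    · simp only [Complex.add_re, Complex.add_im, Complex.sub_re, Complex.sub_im, Complex.neg_re,
        Complex.neg_im, Complex.mul_re, Complex.mul_im, Complex.div_re, Complex.div_im,
        Complex.I_re, Complex.I_im, Complex.ofReal_re, Complex.ofReal_im, Complex.conj_re,
        Complex.conj_im, Complex.normSq_apply, Complex.re_ofNat, Complex.im_ofNat,
        mul_zero, zero_mul, mul_one, sub_zero, zero_sub, add_zero, zero_add, neg_zero, neg_neg]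
      field_simp
      ring
  · rw [hdw2, hdlog, hxp, hyp]
    rw [Complex.ext_iff]
    constructor
    · simp only [Complex.add_re, Complex.add_im, Complex.sub_re, Complex.sub_im, Complex.neg_re,
        Complex.neg_im, Complex.mul_re, Complex.mul_im, Complex.div_re, Complex.div_im,
        Complex.I_re, Complex.I_im, Complex.ofReal_re, Complex.ofReal_im, Complex.conj_re,
        Complex.conj_im, Complex.normSq_apply, Complex.re_ofNat, Complex.im_ofNat,
        mul_zero, zero_mul, mul_one, sub_zero, zero_sub, add_zero, zero_add, neg_zero, neg_neg]
      field_simp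
      linear_combination (-2) * hPQ
    · simp only [Complex.add_re, Complex.add_im, Complex.sub_re, Complex.sub_im, Complex.neg_re,
        Complex.neg_im, Complex.mul_re, Complex.mul_im, Complex.div_re, Complex.div_im,
        Complex.I_re, Complex.I_im, Complex.ofReal_re, Complex.ofReal_im, Complex.conj_re,
        Complex.conj_im, Complex.normSq_apply, Complex.re_ofNat, Complex.im_ofNat,
        mul_zero, zero_mul, mul_one, sub_zero, zero_sub, add_zero, zero_add, neg_zero, neg_neg]
      field_simp
      ring
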